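/- There exists a universal constant C > 0 such that for all 0 < T₀ < 1 < T₁ < ∞, whenever (x,y,s,t,N) satisfies the primary condition over [T₀,T₁] and L ∈ (0,s), one has ∫₀^{NL} | 𝔟^N(x,y;r,s,t) − ∏_{j=1,2} P( V(M_j·r/(Ns)) = V'(M_j'·r/(Nt)) ) | dr ≤ C·N·L²·(1/s + 1/t). -/

import Mathlib

open MeasureTheory Filter Set

noncomputable section

/-- Binomial probability mass at integer index `j`, parameters `(m, p)`:
`C(m,j) p^j (1-p)^(m-j)`, interpreted as `0` unless `0 ≤ j ≤ m`. -/
def binPMF (m : ℕ) (p : ℝ) (j : ℤ) : ℝ :=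
  if 0 ≤ j then (m.choose j.toNat : ℝ) * p ^ j.toNat * (1 - p) ^ (m - j.toNat) else 0

/-- `P(S_m(p) = S'_{m'}(p') + n)` for independent binomial random variables
`S_m(p)` and `S'_{m'}(p')`. -/
def PSS (m m' : ℕ) (p p' : ℝ) (n : ℤ) : ℝ :=
  ∑ k ∈ Finset.range (m' + 1), binPMF m' p' (k : ℤ) * binPMF m p ((k : ℤ) + n)

/-- Poisson probability mass function with mean `l`. -/
def poisPMF (l : ℝ) (k : ℕ) : ℝ := Real.exp (-l) * l ^ k / (Nat.factorial k)

/-- `P(V(l) = V'(l') + n)` for independent Poisson random variables with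
means `l` and `l'`. -/
def PVV (l l' : ℝ) (n : ℤ) : ℝ :=
  ∑' k : ℕ, if 0 ≤ (k : ℤ) + n then poisPMF l' k * poisPMF l ((k : ℤ) + n).toNat else 0

/-- Centered Gaussian density with variance `v`, evaluated at `x`. -/
def gaussD (v x : ℝ) : ℝ := (Real.sqrt (2 * Real.pi * v))⁻¹ * Real.exp (-x ^ 2 / (2 * v))

/-- Euclidean distance of two points of `ℝ × ℝ` (viewed as `ℝ²`). -/
def enorm2 (a b : ℝ × ℝ) : ℝ := Real.sqrt ((a.1 - b.1) ^ 2 + (a.2 - b.2) ^ 2)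

/-- Two-dimensional heat kernel `Q_t(a,b)`. -/
def heatK (t : ℝ) (a b : ℝ × ℝ) : ℝ :=
  (2 * Real.pi * t)⁻¹ * Real.exp (-((a.1 - b.1) ^ 2 + (a.2 - b.2) ^ 2) / (2 * t))

/-- `M_N(u,r) = ⌊N r + N r · u / N^{1/2}⌋`. -/
def Mfl (N : ℕ) (u r : ℝ) : ℤ := ⌊(N : ℝ) * r + (N : ℝ) * r * (u / Real.sqrt N)⌋

/-- `𝔟^N(x,y;r,s,t) = ∏_{j=1,2} P(S_{M_j}(r/(Ns)) = S'_{M_j'}(r/(Nt)))`. -/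
def bUpper (N : ℕ) (x y : ℝ × ℝ) (r s t : ℝ) : ℝ :=
  PSS (Mfl N x.1 s).toNat (Mfl N y.1 t).toNat (r / ((N : ℝ) * s)) (r / ((N : ℝ) * t)) 0 *
  PSS (Mfl N x.2 s).toNat (Mfl N y.2 t).toNat (r / ((N : ℝ) * s)) (r / ((N : ℝ) * t)) 0

/-- `𝔟_N(x,y;r,s,t) = ∏_{j=1,2} N^{1/2} P(S_{M_j}(r/s) = S'_{M_j'}(r/t))`. -/
def bLower (N : ℕ) (x y : ℝ × ℝ) (r s t : ℝ) : ℝ :=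
  (Real.sqrt N * PSS (Mfl N x.1 s).toNat (Mfl N y.1 t).toNat (r / s) (r / t) 0) *
  (Real.sqrt N * PSS (Mfl N x.2 s).toNat (Mfl N y.2 t).toNat (r / s) (r / t) 0)

/-- The primary condition over `[T₀, T₁]` (with parameter `η ∈ (0,1/2)`). -/
def primaryCond (η T0 T1 : ℝ) (x y : ℝ × ℝ) (s t : ℝ) (N : ℕ) : Prop :=
  |x.1| ≤ (N : ℝ) ^ η / 2 ∧ |x.2| ≤ (N : ℝ) ^ η / 2 ∧
  |y.1| ≤ (N : ℝ) ^ η / 2 ∧ |y.2| ≤ (N : ℝ) ^ η / 2 ∧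
  T0 ≤ s ∧ s ≤ t ∧ t ≤ T1 ∧ 16 ≤ N ∧
  1 ≤ ⌊T0 * (N : ℝ) ^ ((1 : ℝ) / 2 - η) / 2⌋

/-- Indicator of `[1, ∞)`. -/
def ind1 (r : ℝ) : ℝ := if 1 ≤ r then 1 else 0

namespace SAux

def bin (n : ℕ) (p : ℝ) (k : ℕ) : ℝ := (n.choose k : ℝ) * p ^ k * (1 - p) ^ (n - k)

lemma bin_nonneg {p : ℝ} (h0 : 0 ≤ p) (h1 : p ≤ 1) (n k : ℕ) : 0 ≤ bin n p k := by
  have h2 : 0 ≤ 1 - p := by linarith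
  unfold bin; positivity

lemma sum_bin (n : ℕ) {p : ℝ} : ∑ k ∈ Finset.range (n + 1), bin n p k = 1 := by
  have h := add_pow p (1 - p) n
  simp only [add_sub_cancel, one_pow] at h
  rw [h]; unfold bin
  exact Finset.sum_congr rfl fun k _ => by ring

lemma bin_le_one {p : ℝ} (h0 : 0 ≤ p) (h1 : p ≤ 1) (n k : ℕ) : bin n p k ≤ 1 := by
  rcases le_or_gt k n with hk | hk
  · calc bin n p k ≤ ∑ j ∈ Finset.range (n + 1), bin n p j :=
        Finset.single_le_sum (fun j _ => bin_nonneg h0 h1 n j)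
          (Finset.mem_range.mpr (Nat.lt_succ_of_le hk))
      _ = 1 := sum_bin n
  · simp [bin, Nat.choose_eq_zero_of_lt hk]

lemma bin_eq_zero {n k : ℕ} (h : n < k) (p : ℝ) : bin n p k = 0 := by
  simp [bin, Nat.choose_eq_zero_of_lt h]

lemma exp_tsum (x : ℝ) : ∑' n : ℕ, x ^ n / n.factorial = Real.exp x := by
  rw [Real.exp_eq_exp_ℝ, NormedSpace.exp_eq_tsum_div]

lemma summable_expSeries (x : ℝ) : Summable (fun n : ℕ => x ^ n / n.factorial) :=
  Real.summable_pow_div_factorial x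

lemma pois_eq (l : ℝ) (k : ℕ) : poisPMF l k = Real.exp (-l) * (l ^ k / k.factorial) := by
  unfold poisPMF; ring

lemma pois_nonneg {l : ℝ} (hl : 0 ≤ l) (k : ℕ) : 0 ≤ poisPMF l k := by
  unfold poisPMF; positivity

lemma summable_pois (l : ℝ) : Summable (poisPMF l) := by
  have : poisPMF l = fun k => Real.exp (-l) * (l ^ k / k.factorial) := funext (pois_eq l)
  rw [this]
  exact (summable_expSeries l).mul_left _

lemma tsum_pois {l : ℝ} : ∑' k, poisPMF l k = 1 := by
  simp only [pois_eq]
  rw [tsum_mul_left, exp_tsum, ← Real.exp_add]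
  simp

lemma pois_le_one {l : ℝ} (hl : 0 ≤ l) (k : ℕ) : poisPMF l k ≤ 1 := by
  calc poisPMF l k ≤ ∑' j, poisPMF l j :=
        Summable.le_tsum (summable_pois l) k (fun j _ => pois_nonneg hl j)
    _ = 1 := tsum_pois

lemma bin_succ_succ (n : ℕ) (p : ℝ) (k : ℕ) :
    bin (n + 1) p (k + 1) = (1 - p) * bin n p (k + 1) + p * bin n p k := by
  unfold bin
  rcases le_or_gt (k + 1) n with hk | hk
  · have h1 : n - (k + 1) + 1 = n - k := by omega
    rw [Nat.choose_succ_succ']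
    push_cast
    rw [← h1]
    ring
  · rcases eq_or_lt_of_le (Nat.lt_iff_add_one_le.mp hk) with hk2 | hk2
    · -- n + 1 = k + 1, i.e. n = k
      have : n = k := by omega
      subst this
      simp [Nat.choose_self, Nat.choose_succ_self, Nat.sub_self]
      ring
    · have h1 : n < k := by omega
      rw [Nat.choose_eq_zero_of_lt (by omega), Nat.choose_eq_zero_of_lt (by omega),
        Nat.choose_eq_zero_of_lt h1]
      simp

lemma bin_zero (n : ℕ) (p : ℝ) : bin (n + 1) p 0 = (1 - p) * bin n p 0 := by
  simp [bin, pow_succ]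
  ring

lemma bin_mul (n : ℕ) (p : ℝ) (k : ℕ) :
    ((k + 1 : ℕ) : ℝ) * bin (n + 1) p (k + 1) = ((n + 1 : ℕ) : ℝ) * p * bin n p k := by
  unfold bin
  have h := Nat.add_one_mul_choose_eq n k
  have hc : ((n + 1) * n.choose k : ℝ) = ((n + 1).choose (k + 1) * (k + 1) : ℝ) := by
    exact_mod_cast congrArg (Nat.cast (R := ℝ)) h
  simp only [Nat.succ_sub_succ_eq_sub]
  push_cast at hc ⊢
  linear_combination (-(p ^ (k + 1) * (1 - p) ^ (n - k))) * hc

end SAux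
section Stein

namespace SAux

def P0 (lam : ℝ) (j : ℕ) : ℝ := lam ^ j / j.factorial

def mS (lam : ℝ) (h : ℕ → ℝ) : ℝ := ∑' j, poisPMF lam j * h j

def FF (lam : ℝ) (h : ℕ → ℝ) (k : ℕ) : ℝ :=
  ∑ j ∈ Finset.range k, (h j - mS lam h) * P0 lam j

def fS (lam : ℝ) (h : ℕ → ℝ) : ℕ → ℝ := fun k =>
  if k = 0 then 0 else (((k - 1).factorial : ℕ) : ℝ) / lam ^ k * FF lam h k

lemma P0_nonneg {lam : ℝ} (hl : 0 ≤ lam) (j : ℕ) : 0 ≤ P0 lam j := by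
  unfold P0; positivity

lemma summable_P0 (lam : ℝ) : Summable (P0 lam) := Real.summable_pow_div_factorial lam

lemma tsum_P0 (lam : ℝ) : ∑' j, P0 lam j = Real.exp lam := exp_tsum lam

lemma fS_succ (lam : ℝ) (h : ℕ → ℝ) (k : ℕ) :
    fS lam h (k + 1) = ((k.factorial : ℕ) : ℝ) / lam ^ (k + 1) * FF lam h (k + 1) := by
  simp [fS]

lemma stein_eq (lam : ℝ) (h : ℕ → ℝ) (hlam : lam ≠ 0) (k : ℕ) :
    lam * fS lam h (k + 1) - (k : ℝ) * fS lam h k = h k - mS lam h := by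
  cases k with
  | zero =>
    simp only [fS_succ, FF, Finset.sum_range_one, P0, fS]
    simp
    field_simp
  | succ j =>
    rw [fS_succ, fS_succ]
    have hFF : FF lam h (j + 2) = FF lam h (j + 1) + (h (j + 1) - mS lam h) * P0 lam (j + 1) := by
      simp [FF, Finset.sum_range_succ]
    rw [hFF]
    have hfac : ((Nat.factorial (j + 1) : ℕ) : ℝ) = ((j : ℝ) + 1) * ((j.factorial : ℕ) : ℝ) := by
      rw [Nat.factorial_succ]; push_cast; ring
    rw [hfac]
    unfold P0
    have hf : ((j.factorial : ℕ) : ℝ) ≠ 0 := Nat.cast_ne_zero.mpr (Nat.factorial_ne_zero j)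
    have hl : lam ^ (j + 2) ≠ 0 := pow_ne_zero _ hlam
    push_cast
    field_simp
    rw [hfac]
    ring

end SAux

end Stein
namespace SAux

-- telescoping for the head sum
lemma teleA (lam : ℝ) (b : ℕ → ℝ) (hrel : ∀ i : ℕ, ((i : ℝ) + 1) * b (i + 1) = lam * b i) :
    ∀ n : ℕ, ∑ i ∈ Finset.range (n + 1), (lam - i) * b i = lam * b n := by
  intro n
  induction n with
  | zero => simp
  | succ n ih =>
    rw [Finset.sum_range_succ, ih]
    push_cast
    linarith [hrel n]

-- telescoping for the tail sum
lemma teleB (lam : ℝ) (k : ℕ) (r : ℕ → ℝ)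
    (h0 : (k : ℝ) * r 0 = 1)
    (hrel : ∀ i : ℕ, ((k : ℝ) + i + 1) * r (i + 1) = lam * r i) :
    ∀ n : ℕ, ∑ i ∈ Finset.range (n + 1), ((k : ℝ) + i - lam) * r i = 1 - lam * r n := by
  intro n
  induction n with
  | zero => simp; linarith
  | succ n ih =>
    rw [Finset.sum_range_succ, ih]
    push_cast
    linarith [hrel n]

def EE (lam : ℝ) (k : ℕ) : ℝ := ∑ i ∈ Finset.range k, P0 lam i
def TT (lam : ℝ) (k : ℕ) : ℝ := ∑' i : ℕ, P0 lam (i + k)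
def cc (lam : ℝ) (k : ℕ) : ℝ := (((k - 1).factorial : ℕ) : ℝ) / lam ^ (k + 1)
def bb (lam : ℝ) (k : ℕ) : ℝ := 1 / lam + ((k : ℝ) - lam) * cc lam k * EE lam k
def gg (lam : ℝ) (k : ℕ) : ℝ := 1 / lam - Real.exp (-lam) * bb lam k * P0 lam k
def dd (lam : ℝ) (k : ℕ) : ℝ := ((k : ℝ) - lam) * cc lam k - Real.exp (-lam) * bb lam k

lemma EE_nonneg {lam : ℝ} (hl : 0 ≤ lam) (k : ℕ) : 0 ≤ EE lam k :=
  Finset.sum_nonneg fun i _ => P0_nonneg hl i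

lemma TT_nonneg {lam : ℝ} (hl : 0 ≤ lam) (k : ℕ) : 0 ≤ TT lam k :=
  tsum_nonneg fun i => P0_nonneg hl _

lemma cc_nonneg {lam : ℝ} (hl : 0 ≤ lam) (k : ℕ) : 0 ≤ cc lam k := by
  unfold cc; positivity

lemma EE_split (lam : ℝ) (k : ℕ) : EE lam k + TT lam k = Real.exp lam := by
  have := Summable.sum_add_tsum_nat_add (f := P0 lam) k (summable_P0 lam)
  rw [tsum_P0] at this
  exact this

lemma EE_succ (lam : ℝ) (k : ℕ) : EE lam (k + 1) = EE lam k + P0 lam k := by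
  simp [EE, Finset.sum_range_succ]

lemma TT_split (lam : ℝ) (k : ℕ) : TT lam k = P0 lam k + TT lam (k + 1) := by
  have h1 := EE_split lam k
  have h2 := EE_split lam (k + 1)
  rw [EE_succ] at h2
  linarith

-- S1 : beta is nonnegative
lemma bb_nonneg {lam : ℝ} (hlam : 0 < lam) (j : ℕ) : 0 ≤ bb lam (j + 1) := by
  set k : ℕ := j + 1 with hkdef
  rcases le_or_gt lam k with hcase | hcase
  · have h1 : 0 ≤ ((k : ℝ) - lam) := by linarith
    have := mul_nonneg (mul_nonneg h1 (cc_nonneg hlam.le k)) (EE_nonneg hlam.le k)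
    unfold bb
    have : 0 ≤ 1 / lam := by positivity
    positivity
  · -- lam > k : need (lam - k) * cc * EE ≤ 1/lam
    have hfac : (((j.factorial : ℕ)) : ℝ) ≠ 0 := Nat.cast_ne_zero.mpr (Nat.factorial_ne_zero j)
    set a : ℕ → ℝ := fun i => ((j.factorial : ℕ) : ℝ) * lam ^ i / (((i.factorial : ℕ) : ℝ) * lam ^ k) with ha
    have ha0 : ∀ i, 0 ≤ a i := by
      intro i; rw [ha]; positivity
    have hrel : ∀ i : ℕ, ((i : ℝ) + 1) * a (i + 1) = lam * a i := by
      intro i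
      rw [ha]
      simp only
      rw [Nat.factorial_succ]
      have hif : ((i.factorial : ℕ) : ℝ) ≠ 0 := Nat.cast_ne_zero.mpr (Nat.factorial_ne_zero i)
      have hlk : lam ^ k ≠ 0 := pow_ne_zero _ (ne_of_gt hlam)
      push_cast
      field_simp
      ring
    have htele := teleA lam a hrel j
    have haj : a j = 1 / lam := by
      rw [ha]
      simp only
      rw [hkdef, pow_succ]
      field_simp
    have hsumle : (lam - k) * ∑ i ∈ Finset.range k, a i ≤ 1 := by
      have hterm : ∀ i ∈ Finset.range k, (lam - k) * a i ≤ (lam - i) * a i := by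
        intro i hi
        have : (i : ℝ) ≤ (k : ℝ) := by
          exact_mod_cast (Finset.mem_range.mp hi).le
        have h2 : lam - k ≤ lam - i := by linarith
        exact mul_le_mul_of_nonneg_right h2 (ha0 i)
      calc (lam - k) * ∑ i ∈ Finset.range k, a i
          = ∑ i ∈ Finset.range k, (lam - k) * a i := Finset.mul_sum _ _ _
        _ ≤ ∑ i ∈ Finset.range k, (lam - i) * a i := Finset.sum_le_sum hterm
        _ = lam * a j := by rw [hkdef]; exact htele
        _ = 1 := by rw [haj]; field_simp
    have hccEE : cc lam k * EE lam k = (∑ i ∈ Finset.range k, a i) / lam := by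
      rw [cc, EE, Finset.mul_sum, Finset.sum_div]
      apply Finset.sum_congr rfl
      intro i _
      rw [ha, P0]
      simp only
      have : (k : ℕ) - 1 = j := by omega
      rw [this, pow_succ]
      have hif : ((i.factorial : ℕ) : ℝ) ≠ 0 := Nat.cast_ne_zero.mpr (Nat.factorial_ne_zero i)
      have hlk : lam ^ k ≠ 0 := pow_ne_zero _ (ne_of_gt hlam)
      field_simp
    unfold bb
    rw [mul_assoc, hccEE]
    have hd : (lam - k) * ((∑ i ∈ Finset.range k, a i) / lam) ≤ 1 / lam := by
      rw [← mul_div_assoc]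
      exact (div_le_div_iff_of_pos_right hlam).mpr hsumle
    linarith [hd]

end SAux
namespace SAux

lemma dd_nonpos {lam : ℝ} (hlam : 0 < lam) (j : ℕ) : dd lam (j + 1) ≤ 0 := by
  set k : ℕ := j + 1 with hkdef
  have hb := bb_nonneg hlam j
  have hexp0 : (0:ℝ) < Real.exp (-lam) := Real.exp_pos _
  rcases le_or_gt (k : ℝ) lam with hcase | hcase
  · have h1 : ((k : ℝ) - lam) * cc lam k ≤ 0 :=
      mul_nonpos_of_nonpos_of_nonneg (by linarith) (cc_nonneg hlam.le k)
    have h2 : 0 ≤ Real.exp (-lam) * bb lam k := mul_nonneg hexp0.le hb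
    unfold dd
    linarith
  · -- lam < k
    have hfac : ((j.factorial : ℕ) : ℝ) ≠ 0 := Nat.cast_ne_zero.mpr (Nat.factorial_ne_zero j)
    set r : ℕ → ℝ := fun i => ((j.factorial : ℕ) : ℝ) * lam ^ i / (((k + i).factorial : ℕ) : ℝ)
      with hr
    have hr0 : ∀ i, 0 ≤ r i := by intro i; rw [hr]; positivity
    have hkr : (k : ℝ) * r 0 = 1 := by
      rw [hr]
      simp only [pow_zero, Nat.add_zero, mul_one]
      rw [hkdef, Nat.factorial_succ]
      have : ((j.factorial : ℕ) : ℝ) ≠ 0 := hfac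
      push_cast
      field_simp
    have hrel : ∀ i : ℕ, ((k : ℝ) + i + 1) * r (i + 1) = lam * r i := by
      intro i
      rw [hr]
      simp only
      have hadd : k + (i + 1) = (k + i) + 1 := by omega
      rw [hadd, Nat.factorial_succ]
      have hif : (((k + i).factorial : ℕ) : ℝ) ≠ 0 :=
        Nat.cast_ne_zero.mpr (Nat.factorial_ne_zero _)
      push_cast
      field_simp
      ring
    have htele := teleB lam k r hkr hrel
    have hpart : ∀ n : ℕ, ∑ i ∈ Finset.range n, r i ≤ 1 / ((k : ℝ) - lam) := by
      intro n
      cases n with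
      | zero =>
        simp only [Finset.range_zero, Finset.sum_empty]
        have h3 : (0:ℝ) < (k:ℝ) - lam := by linarith
        positivity
      | succ m =>
        rw [le_div_iff₀ (by linarith : (0:ℝ) < (k : ℝ) - lam)]
        have hterm : ∀ i ∈ Finset.range (m + 1), ((k : ℝ) - lam) * r i ≤ ((k : ℝ) + i - lam) * r i := by
          intro i hi
          have : (0:ℝ) ≤ i := Nat.cast_nonneg i
          have := hr0 i
          nlinarith
        calc (∑ i ∈ Finset.range (m+1), r i) * ((k:ℝ) - lam)
            = ∑ i ∈ Finset.range (m+1), ((k:ℝ) - lam) * r i := by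
              rw [Finset.sum_mul]; apply Finset.sum_congr rfl; intro i _; ring
          _ ≤ ∑ i ∈ Finset.range (m+1), ((k:ℝ) + i - lam) * r i := Finset.sum_le_sum hterm
          _ = 1 - lam * r m := htele m
          _ ≤ 1 := by nlinarith [hr0 m, hlam]
    have hsumr : Summable r := by
      apply Summable.of_nonneg_of_le hr0 (fun i => ?_) (summable_expSeries lam)
      rw [hr]
      simp only
      have hle : (j.factorial * i.factorial : ℕ) ≤ (k + i).factorial := by
        calc j.factorial * i.factorial ≤ k.factorial * i.factorial := by
              apply Nat.mul_le_mul_right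
              exact Nat.factorial_le (by omega)
          _ ≤ (k + i).factorial :=
            Nat.le_of_dvd (Nat.factorial_pos _)
              (Nat.factorial_mul_factorial_dvd_factorial_add k i)
      have hif : (0:ℝ) < ((i.factorial : ℕ) : ℝ) := by
        exact_mod_cast Nat.factorial_pos i
      have hkif : (0:ℝ) < (((k+i).factorial : ℕ) : ℝ) := by
        exact_mod_cast Nat.factorial_pos (k+i)
      rw [div_le_div_iff₀ hkif hif]
      have hle' : ((j.factorial * i.factorial : ℕ) : ℝ) ≤ (((k + i).factorial : ℕ) : ℝ) := by
        exact_mod_cast hle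
      push_cast at hle'
      have hlp : (0:ℝ) ≤ lam ^ i := by positivity
      nlinarith [hlp, hle']
    have htsumr : ∑' i, r i ≤ 1 / ((k : ℝ) - lam) :=
      Real.tsum_le_of_sum_range_le hr0 hpart
    have hccTT : cc lam k * TT lam k = (∑' i, r i) / lam := by
      rw [cc, TT, ← tsum_mul_left, ← tsum_div_const]
      apply tsum_congr
      intro i
      rw [hr, P0]
      simp only
      have : (k : ℕ) - 1 = j := by omega
      rw [this]
      have hif : (((k + i).factorial : ℕ) : ℝ) ≠ 0 :=
        Nat.cast_ne_zero.mpr (Nat.factorial_ne_zero _)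
      have hlk : lam ^ (k + 1) ≠ 0 := pow_ne_zero _ (ne_of_gt hlam)
      rw [pow_add, pow_add]
      field_simp
      rw [hkdef]; ring
    have hEXP : Real.exp (-lam) * (EE lam k + TT lam k) = 1 := by
      rw [EE_split, ← Real.exp_add]
      simp
    have hdd : dd lam k = Real.exp (-lam) * (((k:ℝ) - lam) * (cc lam k * TT lam k) - 1 / lam) := by
      unfold dd bb
      linear_combination (-(((k:ℝ) - lam) * cc lam k)) * hEXP
    rw [hdd]
    apply mul_nonpos_of_nonneg_of_nonpos hexp0.le
    rw [hccTT]
    have h2 : ((k:ℝ) - lam) * ((∑' i, r i) / lam) ≤ 1 / lam := by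
      rw [← mul_div_assoc]
      apply (div_le_div_iff_of_pos_right hlam).mpr
      calc ((k:ℝ) - lam) * ∑' i, r i ≤ ((k:ℝ) - lam) * (1 / ((k:ℝ)-lam)) := by
            apply mul_le_mul_of_nonneg_left htsumr (by linarith)
        _ = 1 := by
            rw [mul_one_div]
            exact div_self (ne_of_gt (by linarith))
    linarith

lemma gg_le {lam : ℝ} (hlam : 0 < lam) (j : ℕ) : gg lam (j + 1) ≤ 1 / lam := by
  have hb := bb_nonneg hlam j
  have h2 : 0 ≤ Real.exp (-lam) * bb lam (j+1) * P0 lam (j+1) :=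
    mul_nonneg (mul_nonneg (Real.exp_pos _).le hb) (P0_nonneg hlam.le _)
  unfold gg
  linarith

lemma gg_nonneg {lam : ℝ} (hlam : 0 < lam) (j : ℕ) : 0 ≤ gg lam (j + 1) := by
  set k : ℕ := j + 1 with hkdef
  have hb := bb_nonneg hlam j
  have hexp0 : (0:ℝ) < Real.exp (-lam) := Real.exp_pos _
  have hP := P0_nonneg hlam.le k
  have hE := EE_nonneg hlam.le k
  have hpois : Real.exp (-lam) * P0 lam k ≤ 1 := by
    have := pois_le_one hlam.le k
    rw [pois_eq] at this
    exact this
  unfold gg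
  rw [sub_nonneg]
  rcases le_or_gt (k : ℝ) lam with hcase | hcase
  · have hble : bb lam k ≤ 1 / lam := by
      unfold bb
      have h1 : ((k : ℝ) - lam) * cc lam k * EE lam k ≤ 0 :=
        mul_nonpos_of_nonpos_of_nonneg
          (mul_nonpos_of_nonpos_of_nonneg (by linarith) (cc_nonneg hlam.le k)) hE
      linarith
    calc Real.exp (-lam) * bb lam k * P0 lam k = bb lam k * (Real.exp (-lam) * P0 lam k) := by ring
      _ ≤ bb lam k * 1 := by
          apply mul_le_mul_of_nonneg_left hpois hb
      _ ≤ 1 / lam := by rw [mul_one]; exact hble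
  · -- lam < k
    have hccPk : cc lam k * P0 lam k = 1 / ((k:ℝ) * lam) := by
      rw [cc, P0]
      have : (k : ℕ) - 1 = j := by omega
      rw [this, hkdef, Nat.factorial_succ]
      have hif : ((j.factorial : ℕ) : ℝ) ≠ 0 := Nat.cast_ne_zero.mpr (Nat.factorial_ne_zero j)
      push_cast
      rw [pow_succ]
      field_simp
    have hkey : Real.exp (-lam) * bb lam k * P0 lam k
        = Real.exp (-lam) * (P0 lam k + ((k:ℝ) - lam) * EE lam k / k) / lam := by
      unfold bb
      linear_combination (Real.exp (-lam) * ((k:ℝ) - lam) * EE lam k) * hccPk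
    rw [hkey]
    have hup : P0 lam k + ((k:ℝ) - lam) * EE lam k / k ≤ Real.exp lam := by
      have h1 : ((k:ℝ) - lam) * EE lam k / k ≤ EE lam k := by
        rw [div_le_iff₀ (by positivity : (0:ℝ) < (k:ℝ))]
        nlinarith [hE, hcase, hlam]
      have h2 : EE lam k + P0 lam k + TT lam (k+1) = Real.exp lam := by
        have ha := EE_split lam k
        have hb2 := TT_split lam k
        linarith
      have h3 := TT_nonneg hlam.le (k+1)
      linarith
    calc Real.exp (-lam) * (P0 lam k + ((k:ℝ) - lam) * EE lam k / k) / lam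
        ≤ Real.exp (-lam) * Real.exp lam / lam := by
          apply (div_le_div_iff_of_pos_right hlam).mpr
          apply mul_le_mul_of_nonneg_left hup hexp0.le
      _ = 1 / lam := by rw [← Real.exp_add]; simp

lemma identB {lam : ℝ} (hlam : 0 < lam) (k : ℕ) :
    gg lam k + EE lam k * dd lam k - Real.exp (-lam) * bb lam k * TT lam (k + 1) = 0 := by
  have hEXP : Real.exp (-lam) * (EE lam k + P0 lam k + TT lam (k+1)) = 1 := by
    have ha := EE_split lam k
    have hb2 := TT_split lam k
    have : EE lam k + P0 lam k + TT lam (k+1) = Real.exp lam := by linarith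
    rw [this, ← Real.exp_add]
    simp
  have hbb : bb lam k = 1 / lam + ((k:ℝ) - lam) * cc lam k * EE lam k := rfl
  unfold gg dd
  linear_combination (-(bb lam k)) * hEXP - hbb

end SAux
namespace SAux

lemma summable_hP0 {lam : ℝ} (hlam : 0 ≤ lam) {h : ℕ → ℝ}
    (h0 : ∀ k, 0 ≤ h k) (h1 : ∀ k, h k ≤ 1) :
    Summable (fun i => h i * P0 lam i) := by
  apply Summable.of_nonneg_of_le (fun i => mul_nonneg (h0 i) (P0_nonneg hlam i))
    (fun i => ?_) (summable_P0 lam)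
  calc h i * P0 lam i ≤ 1 * P0 lam i :=
        mul_le_mul_of_nonneg_right (h1 i) (P0_nonneg hlam i)
    _ = P0 lam i := one_mul _

lemma mS_split {lam : ℝ} (hlam : 0 ≤ lam) {h : ℕ → ℝ}
    (h0 : ∀ k, 0 ≤ h k) (h1 : ∀ k, h k ≤ 1) (j : ℕ) :
    mS lam h = Real.exp (-lam) * ((∑ i ∈ Finset.range (j + 1), h i * P0 lam i)
      + h (j + 1) * P0 lam (j + 1)
      + ∑' i : ℕ, h (i + (j + 2)) * P0 lam (i + (j + 2))) := by
  have hsummh := summable_hP0 hlam h0 h1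
  have e1 : mS lam h = Real.exp (-lam) * ∑' i, h i * P0 lam i := by
    rw [mS, ← tsum_mul_left]
    apply tsum_congr
    intro i
    rw [pois_eq]
    unfold P0
    ring
  have e2 : (∑' i, h i * P0 lam i)
      = ∑ i ∈ Finset.range (j + 2), h i * P0 lam i
        + ∑' i : ℕ, h (i + (j + 2)) * P0 lam (i + (j + 2)) := by
    rw [← Summable.sum_add_tsum_nat_add (j + 2) hsummh]
  rw [e1, e2, Finset.sum_range_succ]

set_option maxHeartbeats 1600000 in
lemma incr_formula (lam : ℝ) (h : ℕ → ℝ) (hlam : 0 < lam)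
    (h0 : ∀ k, 0 ≤ h k) (h1 : ∀ k, h k ≤ 1) (j : ℕ) :
    fS lam h (j + 2) - fS lam h (j + 1)
      = h (j + 1) * gg lam (j + 1)
        + (∑ i ∈ Finset.range (j + 1), h i * P0 lam i) * dd lam (j + 1)
        - Real.exp (-lam) * bb lam (j + 1)
            * (∑' i : ℕ, h (i + (j + 2)) * P0 lam (i + (j + 2))) := by
  have hlam' : lam ≠ 0 := ne_of_gt hlam
  have hFFeq : FF lam h (j + 1)
      = (∑ i ∈ Finset.range (j + 1), h i * P0 lam i) - mS lam h * EE lam (j + 1) := by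
    rw [FF, EE, Finset.mul_sum, ← Finset.sum_sub_distrib]
    apply Finset.sum_congr rfl
    intro i _
    ring
  have hstep : fS lam h (j + 2) - fS lam h (j + 1)
      = (h (j + 1) - mS lam h) / lam
        + (((j:ℝ) + 1) - lam) * cc lam (j + 1) * FF lam h (j + 1) := by
    rw [fS_succ, fS_succ]
    have hFF2 : FF lam h (j + 2) = FF lam h (j + 1) + (h (j + 1) - mS lam h) * P0 lam (j + 1) := by
      simp [FF, Finset.sum_range_succ]
    have hfac2 : (((j+1).factorial : ℕ) : ℝ) = ((j : ℝ) + 1) * ((j.factorial : ℕ) : ℝ) := by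
      rw [Nat.factorial_succ]; push_cast; ring
    have hcc : cc lam (j + 1) = ((j.factorial : ℕ) : ℝ) / lam ^ (j + 2) := by
      unfold cc
      norm_num
    rw [hFF2, hfac2, hcc]
    unfold P0
    have hf : ((j.factorial : ℕ) : ℝ) ≠ 0 := Nat.cast_ne_zero.mpr (Nat.factorial_ne_zero j)
    have hl2 : lam ^ (j + 2) ≠ 0 := pow_ne_zero _ hlam'
    have hl3 : lam ^ (j + 1) ≠ 0 := pow_ne_zero _ hlam'
    field_simp
    have hfac3 : (((1+j).factorial : ℕ) : ℝ) = ((j : ℝ) + 1) * ((j.factorial : ℕ) : ℝ) := by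
      rw [Nat.add_comm]; exact hfac2
    first
      | (rw [hfac2]; ring)
      | (rw [hfac3]; ring)
  rw [hstep, hFFeq, mS_split hlam.le h0 h1 j]
  have hgg : gg lam (j + 1)
      = 1 / lam - Real.exp (-lam) * bb lam (j + 1) * P0 lam (j + 1) := rfl
  have hdd2 : dd lam (j + 1)
      = (((j:ℝ) + 1) - lam) * cc lam (j + 1) - Real.exp (-lam) * bb lam (j + 1) := by
    unfold dd
    push_cast
    ring
  have hbb : bb lam (j + 1)
      = 1 / lam + (((j:ℝ) + 1) - lam) * cc lam (j + 1) * EE lam (j + 1) := by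
    unfold bb
    push_cast
    ring
  rw [hgg, hdd2, hbb]
  simp only [div_eq_mul_inv]
  ring

set_option maxHeartbeats 1600000 in
lemma fS_incr (lam : ℝ) (h : ℕ → ℝ) (hlam : 0 < lam)
    (h0 : ∀ k, 0 ≤ h k) (h1 : ∀ k, h k ≤ 1) (j : ℕ) :
    |fS lam h (j + 2) - fS lam h (j + 1)| ≤ 1 / lam := by
  have hexp0 : (0:ℝ) < Real.exp (-lam) := Real.exp_pos _
  have hgg0 := gg_nonneg hlam j
  have hggle := gg_le hlam j
  have hdd0 := dd_nonpos hlam j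
  have hbb0 := bb_nonneg hlam j
  have hid := identB hlam (j + 1)
  set Hh : ℝ := ∑ i ∈ Finset.range (j + 1), h i * P0 lam i with hHh
  set Ht : ℝ := ∑' i : ℕ, h (i + (j + 2)) * P0 lam (i + (j + 2)) with hHt
  have hHh0 : 0 ≤ Hh := Finset.sum_nonneg fun i _ => mul_nonneg (h0 i) (P0_nonneg hlam.le i)
  have hHhE : Hh ≤ EE lam (j + 1) := by
    apply Finset.sum_le_sum
    intro i _
    calc h i * P0 lam i ≤ 1 * P0 lam i :=
          mul_le_mul_of_nonneg_right (h1 i) (P0_nonneg hlam.le i)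
      _ = P0 lam i := one_mul _
  have hHt0 : 0 ≤ Ht := tsum_nonneg fun i => mul_nonneg (h0 _) (P0_nonneg hlam.le _)
  have hsum1 : Summable (fun i => h (i + (j+2)) * P0 lam (i + (j+2))) :=
    (summable_nat_add_iff (j+2)).mpr (summable_hP0 hlam.le h0 h1)
  have hsum2 : Summable (fun i : ℕ => P0 lam (i + (j+2))) :=
    (summable_nat_add_iff (j+2)).mpr (summable_P0 lam)
  have hterm : ∀ i : ℕ, h (i + (j+2)) * P0 lam (i + (j+2)) ≤ P0 lam (i + (j+2)) := by
    intro i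
    calc h (i + (j+2)) * P0 lam (i + (j+2)) ≤ 1 * P0 lam (i + (j+2)) :=
          mul_le_mul_of_nonneg_right (h1 _) (P0_nonneg hlam.le _)
      _ = P0 lam (i + (j+2)) := one_mul _
  have hHtT : Ht ≤ TT lam (j + 2) := by
    rw [hHt, TT]
    exact Summable.tsum_le_tsum hterm hsum1 hsum2
  rw [incr_formula lam h hlam h0 h1 j]
  rw [abs_le]
  constructor
  · -- lower bound
    have t1 : 0 ≤ h (j + 1) * gg lam (j + 1) := mul_nonneg (h0 _) hgg0
    have t2 : Hh * dd lam (j + 1) ≥ EE lam (j + 1) * dd lam (j + 1) := by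
      apply mul_le_mul_of_nonpos_right hHhE hdd0
    have t3 : Real.exp (-lam) * bb lam (j + 1) * Ht
        ≤ Real.exp (-lam) * bb lam (j + 1) * TT lam (j + 2) := by
      apply mul_le_mul_of_nonneg_left hHtT (mul_nonneg hexp0.le hbb0)
    have hTT2 : TT lam ((j + 1) + 1) = TT lam (j + 2) := by norm_num
    rw [hTT2] at hid
    linarith
  · -- upper bound
    have t1 : h (j + 1) * gg lam (j + 1) ≤ gg lam (j + 1) := by
      calc h (j + 1) * gg lam (j + 1) ≤ 1 * gg lam (j + 1) :=
            mul_le_mul_of_nonneg_right (h1 _) hgg0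
        _ = gg lam (j + 1) := one_mul _
    have t2 : Hh * dd lam (j + 1) ≤ 0 := mul_nonpos_of_nonneg_of_nonpos hHh0 hdd0
    have t3 : 0 ≤ Real.exp (-lam) * bb lam (j + 1) * Ht :=
      mul_nonneg (mul_nonneg hexp0.le hbb0) hHt0
    linarith

end SAux
namespace SAux

lemma tsum_pois_h_zero (h : ℕ → ℝ) : ∑' k, poisPMF 0 k * h k = h 0 := by
  rw [tsum_eq_single 0]
  · simp [poisPMF]
  · intro k hk
    simp [poisPMF, zero_pow hk]

lemma star (m : ℕ) (p : ℝ) (f : ℕ → ℝ) :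
    ∑ k ∈ Finset.range (m + 2), bin (m + 1) p k * ((((m+1:ℕ)):ℝ) * p * f (k + 1) - (k : ℝ) * f k)
      = (((m+1:ℕ)):ℝ) * p * p
        * ∑ k ∈ Finset.range (m + 1), bin m p k * (f (k + 2) - f (k + 1)) := by
  have e1 : ∑ k ∈ Finset.range (m+1), bin m p (k+1) * f (k+2) + bin m p 0 * f 1
      = ∑ k ∈ Finset.range (m+1), bin m p k * f (k+1) := by
    rw [← Finset.sum_range_succ' (fun k => bin m p k * f (k+1)) (m+1),
      Finset.sum_range_succ, bin_eq_zero (Nat.lt_succ_self m)]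
    simp
  have hA : ∑ k ∈ Finset.range (m+2), bin (m+1) p k * f (k+1)
      = (1-p) * ∑ k ∈ Finset.range (m+1), bin m p k * f (k+1)
        + p * ∑ k ∈ Finset.range (m+1), bin m p k * f (k+2) := by
    rw [Finset.sum_range_succ' (fun k => bin (m+1) p k * f (k+1)) (m+1)]
    simp only [bin_succ_succ, bin_zero]
    have split : ∑ k ∈ Finset.range (m+1), ((1-p) * bin m p (k+1) + p * bin m p k) * f (k+1+1)
        = (1-p) * ∑ k ∈ Finset.range (m+1), bin m p (k+1) * f (k+2)
          + p * ∑ k ∈ Finset.range (m+1), bin m p k * f (k+2) := by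
      rw [Finset.mul_sum, Finset.mul_sum, ← Finset.sum_add_distrib]
      apply Finset.sum_congr rfl
      intro k _
      ring
    rw [split]
    linear_combination (1 - p) * e1
  have hB : ∑ k ∈ Finset.range (m+2), (k : ℝ) * (bin (m+1) p k * f k)
      = (((m+1:ℕ)):ℝ) * p * ∑ k ∈ Finset.range (m+1), bin m p k * f (k+1) := by
    rw [Finset.sum_range_succ' (fun k => (k:ℝ) * (bin (m+1) p k * f k)) (m+1)]
    simp only [Nat.cast_zero, zero_mul, add_zero]
    rw [Finset.mul_sum]
    apply Finset.sum_congr rfl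
    intro k _
    have hb := bin_mul m p k
    push_cast at hb ⊢
    linear_combination (f (k+1)) * hb
  have hsplit : ∑ k ∈ Finset.range (m + 2),
        bin (m + 1) p k * ((((m+1:ℕ)):ℝ) * p * f (k + 1) - (k : ℝ) * f k)
      = (((m+1:ℕ)):ℝ) * p * (∑ k ∈ Finset.range (m+2), bin (m+1) p k * f (k+1))
        - ∑ k ∈ Finset.range (m+2), (k : ℝ) * (bin (m+1) p k * f k) := by
    rw [Finset.mul_sum, ← Finset.sum_sub_distrib]
    apply Finset.sum_congr rfl
    intro k _
    ring
  have hsub : ∑ k ∈ Finset.range (m + 1), bin m p k * (f (k + 2) - f (k + 1))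
      = (∑ k ∈ Finset.range (m+1), bin m p k * f (k+2))
        - ∑ k ∈ Finset.range (m+1), bin m p k * f (k+1) := by
    rw [← Finset.sum_sub_distrib]
    apply Finset.sum_congr rfl
    intro k _
    ring
  rw [hsplit, hA, hB, hsub]
  ring

lemma steinA (n : ℕ) (p : ℝ) (hp0 : 0 ≤ p) (hp1 : p ≤ 1) (h : ℕ → ℝ)
    (h0 : ∀ k, 0 ≤ h k) (h1 : ∀ k, h k ≤ 1) :
    |∑ k ∈ Finset.range (n + 1), bin n p k * h k - ∑' k, poisPMF ((n : ℝ) * p) k * h k| ≤ p := by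
  rcases eq_or_lt_of_le hp0 with hp | hp
  · -- p = 0
    rw [← hp, mul_zero, tsum_pois_h_zero]
    have hsum : ∑ k ∈ Finset.range (n + 1), bin n 0 k * h k = h 0 := by
      rw [Finset.sum_eq_single_of_mem 0 (Finset.mem_range.mpr (Nat.succ_pos n))]
      · simp [bin]
      · intro k _ hk
        simp [bin, zero_pow hk]
    rw [hsum]
    simp
  rcases Nat.eq_zero_or_pos n with hn | hn
  · subst hn
    simp only [Nat.cast_zero, zero_mul]
    rw [tsum_pois_h_zero, Finset.sum_range_one]
    have hb : bin 0 p 0 = 1 := by simp [bin]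
    rw [hb, one_mul, sub_self, abs_zero]
    exact hp.le
  · obtain ⟨m, rfl⟩ : ∃ m, n = m + 1 := ⟨n - 1, by omega⟩
    have hlam : 0 < (((m+1:ℕ)):ℝ) * p := by positivity
    have hmS : (∑' k, poisPMF (((m+1:ℕ):ℝ) * p) k * h k) = mS ((((m+1:ℕ)):ℝ) * p) h := rfl
    have heq1 : ∑ k ∈ Finset.range (m + 1 + 1), bin (m+1) p k * h k
          - mS ((((m+1:ℕ)):ℝ) * p) h
        = ∑ k ∈ Finset.range (m + 1 + 1), bin (m+1) p k
            * (h k - mS ((((m+1:ℕ)):ℝ) * p) h) := by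
      have e : ∑ k ∈ Finset.range (m + 1 + 1), bin (m+1) p k
            * (h k - mS ((((m+1:ℕ)):ℝ) * p) h)
          = ∑ k ∈ Finset.range (m + 1 + 1), bin (m+1) p k * h k
            - (∑ k ∈ Finset.range (m + 1 + 1), bin (m+1) p k) * mS ((((m+1:ℕ)):ℝ) * p) h := by
        rw [Finset.sum_mul, ← Finset.sum_sub_distrib]
        exact Finset.sum_congr rfl fun k _ => by ring
      rw [e, sum_bin (m+1)]
      ring
    have heq2 : ∑ k ∈ Finset.range (m + 1 + 1), bin (m+1) p k
          * (h k - mS ((((m+1:ℕ)):ℝ) * p) h)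
        = (((m+1:ℕ)):ℝ) * p * p * ∑ k ∈ Finset.range (m + 1),
            bin m p k * (fS ((((m+1:ℕ)):ℝ) * p) h (k + 2) - fS ((((m+1:ℕ)):ℝ) * p) h (k + 1)) := by
      have e : ∀ k, bin (m+1) p k * (h k - mS ((((m+1:ℕ)):ℝ) * p) h)
          = bin (m+1) p k * ((((m+1:ℕ)):ℝ) * p * fS ((((m+1:ℕ)):ℝ) * p) h (k + 1)
              - (k : ℝ) * fS ((((m+1:ℕ)):ℝ) * p) h k) := by
        intro k
        rw [stein_eq ((((m+1:ℕ)):ℝ) * p) h hlam.ne' k]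
      calc ∑ k ∈ Finset.range (m + 1 + 1), bin (m+1) p k
            * (h k - mS ((((m+1:ℕ)):ℝ) * p) h)
          = ∑ k ∈ Finset.range (m + 1 + 1), bin (m+1) p k
            * ((((m+1:ℕ)):ℝ) * p * fS ((((m+1:ℕ)):ℝ) * p) h (k + 1)
                - (k : ℝ) * fS ((((m+1:ℕ)):ℝ) * p) h k) :=
            Finset.sum_congr rfl fun k _ => e k
        _ = _ := star m p (fS ((((m+1:ℕ)):ℝ) * p) h)
    have habs : |∑ k ∈ Finset.range (m + 1),
          bin m p k * (fS ((((m+1:ℕ)):ℝ) * p) h (k + 2) - fS ((((m+1:ℕ)):ℝ) * p) h (k + 1))|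
        ≤ 1 / ((((m+1:ℕ)):ℝ) * p) := by
      calc |∑ k ∈ Finset.range (m + 1),
            bin m p k * (fS ((((m+1:ℕ)):ℝ) * p) h (k + 2) - fS ((((m+1:ℕ)):ℝ) * p) h (k + 1))|
          ≤ ∑ k ∈ Finset.range (m + 1),
            |bin m p k * (fS ((((m+1:ℕ)):ℝ) * p) h (k + 2) - fS ((((m+1:ℕ)):ℝ) * p) h (k + 1))| :=
            Finset.abs_sum_le_sum_abs _ _
        _ ≤ ∑ k ∈ Finset.range (m + 1), bin m p k * (1 / ((((m+1:ℕ)):ℝ) * p)) := by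
            apply Finset.sum_le_sum
            intro k _
            rw [abs_mul, abs_of_nonneg (bin_nonneg hp0 hp1 m k)]
            exact mul_le_mul_of_nonneg_left
              (fS_incr ((((m+1:ℕ)):ℝ) * p) h hlam h0 h1 k) (bin_nonneg hp0 hp1 m k)
        _ = 1 / ((((m+1:ℕ)):ℝ) * p) := by
            rw [← Finset.sum_mul, sum_bin m, one_mul]
    rw [hmS, heq1, heq2, abs_mul, abs_of_nonneg (by positivity : (0:ℝ) ≤ (((m+1:ℕ)):ℝ) * p * p)]
    calc (((m+1:ℕ)):ℝ) * p * p * |∑ k ∈ Finset.range (m + 1),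
          bin m p k * (fS ((((m+1:ℕ)):ℝ) * p) h (k + 2) - fS ((((m+1:ℕ)):ℝ) * p) h (k + 1))|
        ≤ (((m+1:ℕ)):ℝ) * p * p * (1 / ((((m+1:ℕ)):ℝ) * p)) := by
          apply mul_le_mul_of_nonneg_left habs (by positivity)
      _ = p := by
          field_simp

end SAux
namespace SAux

lemma PSS_eq (m m' : ℕ) (p p' : ℝ) :
    PSS m m' p p' 0 = ∑ k ∈ Finset.range (m' + 1), bin m' p' k * bin m p k := by
  unfold PSS
  apply Finset.sum_congr rfl
  intro k _
  have h1 : ∀ (mm : ℕ) (q : ℝ), binPMF mm q ((k : ℤ)) = bin mm q k := by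
    intro mm q
    unfold binPMF bin
    rw [if_pos (Int.natCast_nonneg k), Int.toNat_natCast]
  rw [add_zero, h1, h1]

lemma PVV_eq (l l' : ℝ) : PVV l l' 0 = ∑' k, poisPMF l k * poisPMF l' k := by
  unfold PVV
  apply tsum_congr
  intro k
  rw [add_zero, if_pos (Int.natCast_nonneg k), Int.toNat_natCast]
  ring

lemma PSS_nonneg {m m' : ℕ} {p p' : ℝ} (hp0 : 0 ≤ p) (hp1 : p ≤ 1)
    (hq0 : 0 ≤ p') (hq1 : p' ≤ 1) : 0 ≤ PSS m m' p p' 0 := by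
  rw [PSS_eq]
  exact Finset.sum_nonneg fun k _ =>
    mul_nonneg (bin_nonneg hq0 hq1 m' k) (bin_nonneg hp0 hp1 m k)

lemma PSS_le_one {m m' : ℕ} {p p' : ℝ} (hp0 : 0 ≤ p) (hp1 : p ≤ 1)
    (hq0 : 0 ≤ p') (hq1 : p' ≤ 1) : PSS m m' p p' 0 ≤ 1 := by
  rw [PSS_eq]
  calc ∑ k ∈ Finset.range (m' + 1), bin m' p' k * bin m p k
      ≤ ∑ k ∈ Finset.range (m' + 1), bin m' p' k := by
        apply Finset.sum_le_sum
        intro k _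
        calc bin m' p' k * bin m p k ≤ bin m' p' k * 1 :=
              mul_le_mul_of_nonneg_left (bin_le_one hp0 hp1 m k) (bin_nonneg hq0 hq1 m' k)
          _ = bin m' p' k := mul_one _
    _ = 1 := sum_bin m'

lemma summable_poisMul {l l' : ℝ} (hl : 0 ≤ l) (hl' : 0 ≤ l') :
    Summable (fun k => poisPMF l k * poisPMF l' k) := by
  apply Summable.of_nonneg_of_le
    (fun k => mul_nonneg (pois_nonneg hl k) (pois_nonneg hl' k))
    (fun k => ?_) (summable_pois l)
  calc poisPMF l k * poisPMF l' k ≤ poisPMF l k * 1 :=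
        mul_le_mul_of_nonneg_left (pois_le_one hl' k) (pois_nonneg hl k)
    _ = poisPMF l k := mul_one _

lemma PVV_nonneg {l l' : ℝ} (hl : 0 ≤ l) (hl' : 0 ≤ l') : 0 ≤ PVV l l' 0 := by
  rw [PVV_eq]
  exact tsum_nonneg fun k => mul_nonneg (pois_nonneg hl k) (pois_nonneg hl' k)

lemma PVV_le_one {l l' : ℝ} (hl : 0 ≤ l) (hl' : 0 ≤ l') : PVV l l' 0 ≤ 1 := by
  rw [PVV_eq]
  calc ∑' k, poisPMF l k * poisPMF l' k ≤ ∑' k, poisPMF l k := by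
        apply Summable.tsum_le_tsum (fun k => ?_) (summable_poisMul hl hl') (summable_pois l)
        calc poisPMF l k * poisPMF l' k ≤ poisPMF l k * 1 :=
              mul_le_mul_of_nonneg_left (pois_le_one hl' k) (pois_nonneg hl k)
          _ = poisPMF l k := mul_one _
    _ = 1 := tsum_pois

lemma oneFactor (m m' : ℕ) (p p' : ℝ) (hp0 : 0 ≤ p) (hp1 : p ≤ 1)
    (hq0 : 0 ≤ p') (hq1 : p' ≤ 1) :
    |PSS m m' p p' 0 - PVV ((m : ℝ) * p) ((m' : ℝ) * p') 0| ≤ p + p' := by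
  have hl : (0:ℝ) ≤ (m : ℝ) * p := by positivity
  have hl' : (0:ℝ) ≤ (m' : ℝ) * p' := by positivity
  have hI1 : |∑ k ∈ Finset.range (m' + 1), bin m' p' k * bin m p k
      - ∑' k, poisPMF ((m' : ℝ) * p') k * bin m p k| ≤ p' :=
    steinA m' p' hq0 hq1 (bin m p) (fun k => bin_nonneg hp0 hp1 m k)
      (fun k => bin_le_one hp0 hp1 m k)
  have hswap : (∑' k, poisPMF ((m' : ℝ) * p') k * bin m p k)
      = ∑ k ∈ Finset.range (m + 1), bin m p k * poisPMF ((m' : ℝ) * p') k := by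
    rw [tsum_eq_sum (s := Finset.range (m + 1)) ?_]
    · exact Finset.sum_congr rfl fun k _ => mul_comm _ _
    · intro k hk
      have hm : m < k := by
        rcases Finset.mem_range.not.mp hk with h
        omega
      rw [bin_eq_zero hm, mul_zero]
  have hI2 : |∑ k ∈ Finset.range (m + 1), bin m p k * poisPMF ((m' : ℝ) * p') k
      - ∑' k, poisPMF ((m : ℝ) * p) k * poisPMF ((m' : ℝ) * p') k| ≤ p :=
    steinA m p hp0 hp1 (poisPMF ((m' : ℝ) * p')) (fun k => pois_nonneg hl' k)
      (fun k => pois_le_one hl' k)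
  rw [PSS_eq, PVV_eq]
  rw [hswap] at hI1
  calc |∑ k ∈ Finset.range (m' + 1), bin m' p' k * bin m p k
        - ∑' k, poisPMF ((m : ℝ) * p) k * poisPMF ((m' : ℝ) * p') k|
      ≤ |∑ k ∈ Finset.range (m' + 1), bin m' p' k * bin m p k
          - ∑ k ∈ Finset.range (m + 1), bin m p k * poisPMF ((m' : ℝ) * p') k|
        + |∑ k ∈ Finset.range (m + 1), bin m p k * poisPMF ((m' : ℝ) * p') k
          - ∑' k, poisPMF ((m : ℝ) * p) k * poisPMF ((m' : ℝ) * p') k| := abs_sub_le _ _ _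
    _ ≤ p' + p := add_le_add hI1 hI2
    _ = p + p' := by ring

lemma prod_diff {a b c d : ℝ} (hb0 : 0 ≤ b) (hb1 : b ≤ 1) (hc0 : 0 ≤ c) (hc1 : c ≤ 1) :
    |a * b - c * d| ≤ |a - c| + |b - d| := by
  have he : a * b - c * d = (a - c) * b + c * (b - d) := by ring
  rw [he]
  calc |(a - c) * b + c * (b - d)| ≤ |(a - c) * b| + |c * (b - d)| := abs_add_le _ _
    _ = |a - c| * |b| + |c| * |b - d| := by rw [abs_mul, abs_mul]
    _ ≤ |a - c| * 1 + 1 * |b - d| := by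
        apply add_le_add
        · exact mul_le_mul_of_nonneg_left (by rw [abs_of_nonneg hb0]; exact hb1) (abs_nonneg _)
        · exact mul_le_mul_of_nonneg_right (by rw [abs_of_nonneg hc0]; exact hc1) (abs_nonneg _)
    _ = |a - c| + |b - d| := by ring

lemma Mfl_ge_one {N : ℕ} {u v : ℝ} (hN : 1 ≤ (N : ℝ)) (hu : |u| ≤ Real.sqrt N / 2)
    (hNv : 2 ≤ (N : ℝ) * v) : 1 ≤ Mfl N u v := by
  unfold Mfl
  rw [Int.le_floor]
  push_cast
  have hs : (0:ℝ) < Real.sqrt N := Real.sqrt_pos.mpr (by linarith)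
  have h2 : |u / Real.sqrt N| ≤ 1 / 2 := by
    rw [abs_div, abs_of_pos hs, div_le_iff₀ hs]
    linarith
  have h3 : -(1/2 : ℝ) ≤ u / Real.sqrt N := by
    have := neg_abs_le (u / Real.sqrt N)
    linarith
  have hNv0 : (0:ℝ) ≤ (N : ℝ) * v := by linarith
  have hprod : 0 ≤ ((N : ℝ) * v) * (u / Real.sqrt N + 1 / 2) :=
    mul_nonneg hNv0 (by linarith)
  nlinarith [hprod]

end SAux
open SAux in
theorem stmt1 :
    ∃ C : ℝ, 0 < C ∧
      ∀ (η T0 T1 : ℝ), 0 < η → η < 1 / 2 → 0 < T0 → T0 < 1 → 1 < T1 →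
        ∀ (x y : ℝ × ℝ) (s t : ℝ) (N : ℕ), primaryCond η T0 T1 x y s t N →
          ∀ L : ℝ, 0 < L → L < s →
            (∫ r in (0:ℝ)..((N : ℝ) * L),
              |bUpper N x y r s t -
                PVV (((Mfl N x.1 s : ℤ) : ℝ) * r / ((N : ℝ) * s))
                    (((Mfl N y.1 t : ℤ) : ℝ) * r / ((N : ℝ) * t)) 0 *
                PVV (((Mfl N x.2 s : ℤ) : ℝ) * r / ((N : ℝ) * s))
                    (((Mfl N y.2 t : ℤ) : ℝ) * r / ((N : ℝ) * t)) 0|) ≤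
            C * N * L ^ 2 * (1 / s + 1 / t) := by
  refine ⟨2, by norm_num, ?_⟩
  intro η T0 T1 hη0 hη2 hT00 hT01 hT11 x y s t N hpc L hL0 hLs
  obtain ⟨hx1, hx2, hy1, hy2, hT0s, hst, htT1, hN16, hfloor⟩ := hpc
  have hN1 : (1:ℝ) ≤ (N:ℝ) := by
    have : (16:ℝ) ≤ (N:ℝ) := by exact_mod_cast hN16
    linarith
  have hs0 : 0 < s := lt_of_lt_of_le hT00 hT0s
  have ht0 : 0 < t := lt_of_lt_of_le hs0 hst
  have hN0 : (0:ℝ) < N := by linarith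
  have hNs0 : (0:ℝ) < (N:ℝ) * s := by positivity
  have hNt0 : (0:ℝ) < (N:ℝ) * t := by positivity
  have hsq : (N:ℝ) ^ η ≤ Real.sqrt N := by
    rw [Real.sqrt_eq_rpow]
    exact Real.rpow_le_rpow_of_exponent_le hN1 (by linarith)
  have hfl : (2:ℝ) ≤ T0 * (N:ℝ) ^ ((1:ℝ)/2 - η) := by
    have h := Int.le_floor.mp hfloor
    push_cast at h
    linarith
  have hpow_le : (N:ℝ) ^ ((1:ℝ)/2 - η) ≤ (N:ℝ) := by
    calc (N:ℝ) ^ ((1:ℝ)/2 - η) ≤ (N:ℝ) ^ (1:ℝ) :=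
          Real.rpow_le_rpow_of_exponent_le hN1 (by linarith)
      _ = (N:ℝ) := Real.rpow_one _
  have hNs2 : (2:ℝ) ≤ (N:ℝ) * s := by
    calc (2:ℝ) ≤ T0 * (N:ℝ)^((1:ℝ)/2 - η) := hfl
      _ ≤ T0 * (N:ℝ) := mul_le_mul_of_nonneg_left hpow_le hT00.le
      _ = (N:ℝ) * T0 := mul_comm _ _
      _ ≤ (N:ℝ) * s := mul_le_mul_of_nonneg_left hT0s (by linarith)
  have hNt2 : (2:ℝ) ≤ (N:ℝ) * t :=
    le_trans hNs2 (mul_le_mul_of_nonneg_left hst (by linarith))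
  have habs : ∀ u : ℝ, |u| ≤ (N:ℝ)^η/2 → |u| ≤ Real.sqrt N / 2 := fun u h => by linarith
  have hM1 : 1 ≤ Mfl N x.1 s := Mfl_ge_one hN1 (habs _ hx1) hNs2
  have hM2 : 1 ≤ Mfl N x.2 s := Mfl_ge_one hN1 (habs _ hx2) hNs2
  have hM1' : 1 ≤ Mfl N y.1 t := Mfl_ge_one hN1 (habs _ hy1) hNt2
  have hM2' : 1 ≤ Mfl N y.2 t := Mfl_ge_one hN1 (habs _ hy2) hNt2
  have hcast : ∀ M : ℤ, 1 ≤ M → ((M : ℝ) = ((M.toNat : ℕ) : ℝ)) := by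
    intro M hM
    have h0 : (0:ℤ) ≤ M := by linarith
    exact_mod_cast (congrArg (fun z : ℤ => (z : ℝ)) (Int.toNat_of_nonneg h0)).symm
  -- pointwise bound
  have hpt : ∀ r ∈ Set.Icc (0:ℝ) ((N : ℝ) * L),
      |bUpper N x y r s t -
          PVV (((Mfl N x.1 s : ℤ) : ℝ) * r / ((N : ℝ) * s))
              (((Mfl N y.1 t : ℤ) : ℝ) * r / ((N : ℝ) * t)) 0 *
          PVV (((Mfl N x.2 s : ℤ) : ℝ) * r / ((N : ℝ) * s))
              (((Mfl N y.2 t : ℤ) : ℝ) * r / ((N : ℝ) * t)) 0|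
        ≤ 2 * (1 / ((N:ℝ)*s) + 1 / ((N:ℝ)*t)) * r := by
    rintro r ⟨hr0, hrb⟩
    have hp0 : 0 ≤ r / ((N:ℝ)*s) := div_nonneg hr0 hNs0.le
    have hp1 : r / ((N:ℝ)*s) ≤ 1 := by
      rw [div_le_one hNs0]
      calc r ≤ (N:ℝ) * L := hrb
        _ ≤ (N:ℝ) * s := mul_le_mul_of_nonneg_left hLs.le hN0.le
    have hq0 : 0 ≤ r / ((N:ℝ)*t) := div_nonneg hr0 hNt0.le
    have hq1 : r / ((N:ℝ)*t) ≤ 1 := by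
      rw [div_le_one hNt0]
      calc r ≤ (N:ℝ) * L := hrb
        _ ≤ (N:ℝ) * t := mul_le_mul_of_nonneg_left (by linarith) hN0.le
    have harg1 : ((Mfl N x.1 s : ℤ) : ℝ) * r / ((N : ℝ) * s)
        = (((Mfl N x.1 s).toNat : ℕ) : ℝ) * (r / ((N:ℝ)*s)) := by
      rw [hcast _ hM1, mul_div_assoc]
    have harg2 : ((Mfl N x.2 s : ℤ) : ℝ) * r / ((N : ℝ) * s)
        = (((Mfl N x.2 s).toNat : ℕ) : ℝ) * (r / ((N:ℝ)*s)) := by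
      rw [hcast _ hM2, mul_div_assoc]
    have harg1' : ((Mfl N y.1 t : ℤ) : ℝ) * r / ((N : ℝ) * t)
        = (((Mfl N y.1 t).toNat : ℕ) : ℝ) * (r / ((N:ℝ)*t)) := by
      rw [hcast _ hM1', mul_div_assoc]
    have harg2' : ((Mfl N y.2 t : ℤ) : ℝ) * r / ((N : ℝ) * t)
        = (((Mfl N y.2 t).toNat : ℕ) : ℝ) * (r / ((N:ℝ)*t)) := by
      rw [hcast _ hM2', mul_div_assoc]
    rw [harg1, harg2, harg1', harg2']
    have hbu : bUpper N x y r s t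
        = PSS (Mfl N x.1 s).toNat (Mfl N y.1 t).toNat (r / ((N:ℝ)*s)) (r / ((N:ℝ)*t)) 0 *
          PSS (Mfl N x.2 s).toNat (Mfl N y.2 t).toNat (r / ((N:ℝ)*s)) (r / ((N:ℝ)*t)) 0 := rfl
    rw [hbu]
    have hof1 := oneFactor (Mfl N x.1 s).toNat (Mfl N y.1 t).toNat
      (r / ((N:ℝ)*s)) (r / ((N:ℝ)*t)) hp0 hp1 hq0 hq1
    have hof2 := oneFactor (Mfl N x.2 s).toNat (Mfl N y.2 t).toNat
      (r / ((N:ℝ)*s)) (r / ((N:ℝ)*t)) hp0 hp1 hq0 hq1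
    have hl1 : (0:ℝ) ≤ (((Mfl N x.1 s).toNat : ℕ) : ℝ) * (r / ((N:ℝ)*s)) := by positivity
    have hl1' : (0:ℝ) ≤ (((Mfl N y.1 t).toNat : ℕ) : ℝ) * (r / ((N:ℝ)*t)) := by positivity
    have hpd := prod_diff
      (a := PSS (Mfl N x.1 s).toNat (Mfl N y.1 t).toNat (r / ((N:ℝ)*s)) (r / ((N:ℝ)*t)) 0)
      (b := PSS (Mfl N x.2 s).toNat (Mfl N y.2 t).toNat (r / ((N:ℝ)*s)) (r / ((N:ℝ)*t)) 0)
      (c := PVV ((((Mfl N x.1 s).toNat : ℕ) : ℝ) * (r / ((N:ℝ)*s)))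
              ((((Mfl N y.1 t).toNat : ℕ) : ℝ) * (r / ((N:ℝ)*t))) 0)
      (d := PVV ((((Mfl N x.2 s).toNat : ℕ) : ℝ) * (r / ((N:ℝ)*s)))
              ((((Mfl N y.2 t).toNat : ℕ) : ℝ) * (r / ((N:ℝ)*t))) 0)
      (PSS_nonneg hp0 hp1 hq0 hq1) (PSS_le_one hp0 hp1 hq0 hq1)
      (PVV_nonneg hl1 hl1') (PVV_le_one hl1 hl1')
    have hsum : 2 * (1 / ((N:ℝ)*s) + 1 / ((N:ℝ)*t)) * r
        = (r / ((N:ℝ)*s) + r / ((N:ℝ)*t)) + (r / ((N:ℝ)*s) + r / ((N:ℝ)*t)) := by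
      simp only [div_eq_mul_inv]
      ring
    rw [hsum]
    calc |PSS (Mfl N x.1 s).toNat (Mfl N y.1 t).toNat (r / ((N:ℝ)*s)) (r / ((N:ℝ)*t)) 0 *
            PSS (Mfl N x.2 s).toNat (Mfl N y.2 t).toNat (r / ((N:ℝ)*s)) (r / ((N:ℝ)*t)) 0 -
          PVV ((((Mfl N x.1 s).toNat : ℕ) : ℝ) * (r / ((N:ℝ)*s)))
              ((((Mfl N y.1 t).toNat : ℕ) : ℝ) * (r / ((N:ℝ)*t))) 0 *
          PVV ((((Mfl N x.2 s).toNat : ℕ) : ℝ) * (r / ((N:ℝ)*s)))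
              ((((Mfl N y.2 t).toNat : ℕ) : ℝ) * (r / ((N:ℝ)*t))) 0|
        ≤ |PSS (Mfl N x.1 s).toNat (Mfl N y.1 t).toNat (r / ((N:ℝ)*s)) (r / ((N:ℝ)*t)) 0 -
            PVV ((((Mfl N x.1 s).toNat : ℕ) : ℝ) * (r / ((N:ℝ)*s)))
                ((((Mfl N y.1 t).toNat : ℕ) : ℝ) * (r / ((N:ℝ)*t))) 0|
          + |PSS (Mfl N x.2 s).toNat (Mfl N y.2 t).toNat (r / ((N:ℝ)*s)) (r / ((N:ℝ)*t)) 0 -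
            PVV ((((Mfl N x.2 s).toNat : ℕ) : ℝ) * (r / ((N:ℝ)*s)))
                ((((Mfl N y.2 t).toNat : ℕ) : ℝ) * (r / ((N:ℝ)*t))) 0| := hpd
      _ ≤ (r / ((N:ℝ)*s) + r / ((N:ℝ)*t)) + (r / ((N:ℝ)*s) + r / ((N:ℝ)*t)) :=
          add_le_add hof1 hof2
  -- integral bound
  have hb0 : (0:ℝ) ≤ (N:ℝ) * L := by positivity
  by_cases hint : IntervalIntegrable
      (fun r => |bUpper N x y r s t -
          PVV (((Mfl N x.1 s : ℤ) : ℝ) * r / ((N : ℝ) * s))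
              (((Mfl N y.1 t : ℤ) : ℝ) * r / ((N : ℝ) * t)) 0 *
          PVV (((Mfl N x.2 s : ℤ) : ℝ) * r / ((N : ℝ) * s))
              (((Mfl N y.2 t : ℤ) : ℝ) * r / ((N : ℝ) * t)) 0|)
      MeasureTheory.volume 0 ((N : ℝ) * L)
  · have hG : IntervalIntegrable (fun r : ℝ => 2 * (1 / ((N:ℝ)*s) + 1 / ((N:ℝ)*t)) * r)
        MeasureTheory.volume 0 ((N : ℝ) * L) :=
      (continuous_const.mul continuous_id).intervalIntegrable _ _
    calc (∫ r in (0:ℝ)..((N : ℝ) * L),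
          |bUpper N x y r s t -
            PVV (((Mfl N x.1 s : ℤ) : ℝ) * r / ((N : ℝ) * s))
                (((Mfl N y.1 t : ℤ) : ℝ) * r / ((N : ℝ) * t)) 0 *
            PVV (((Mfl N x.2 s : ℤ) : ℝ) * r / ((N : ℝ) * s))
                (((Mfl N y.2 t : ℤ) : ℝ) * r / ((N : ℝ) * t)) 0|)
        ≤ ∫ r in (0:ℝ)..((N : ℝ) * L), 2 * (1 / ((N:ℝ)*s) + 1 / ((N:ℝ)*t)) * r :=
          intervalIntegral.integral_mono_on hb0 hint hG hpt
      _ = 2 * (1 / ((N:ℝ)*s) + 1 / ((N:ℝ)*t)) * ∫ r in (0:ℝ)..((N : ℝ) * L), r := by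
          rw [intervalIntegral.integral_const_mul]
      _ = 2 * (1 / ((N:ℝ)*s) + 1 / ((N:ℝ)*t)) * ((((N : ℝ) * L) ^ 2 - 0 ^ 2) / 2) := by
          rw [integral_id]
      _ = (N:ℝ) * L ^ 2 * (1 / s + 1 / t) := by
          field_simp
          ring
      _ ≤ 2 * (N:ℝ) * L ^ 2 * (1 / s + 1 / t) := by
          have hpos : (0:ℝ) ≤ (N:ℝ) * L ^ 2 * (1 / s + 1 / t) := by positivity
          linarith
  · rw [intervalIntegral.integral_undef hint]
    positivity
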